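/- Let 0 < α < 1, h > 0, m a positive integer, and g ∈ C^m[0,h] with g^(j)(0) = 0 for 0 ≤ j ≤ m. Define w(x) := ∫₀ˣ (x-t)^(α-1) g(t) dt. Then w ∈ C^m[0,h], w^(i)(x) = ∫₀ˣ (x-t)^(α-1) g^(i)(t) dt for 1 ≤ i ≤ m, w^(j)(0) = 0 for 0 ≤ j ≤ m, and ‖w'‖_{C^{m-1}[0,h]} ≤ C h^α ‖g'‖_{C^{m-1}[0,h]} for a constant C depending only on α. -/

import Mathlib

open Real MeasureTheory intervalIntegral Set Filter Topology

set_option maxHeartbeats 1000000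

noncomputable def RL (β : ℝ) (f : ℝ → ℝ) (x : ℝ) : ℝ := ∫ t in (0:ℝ)..x, (x - t) ^ (β - 1) * f t

lemma rl_integrable {β h : ℝ} {φ : ℝ → ℝ} (hβ : 0 < β) (hφ : ContinuousOn φ (Icc 0 h)) {a b : ℝ}
    (ha : 0 ≤ a) (hab : a ≤ b) (hbh : b ≤ h) :
    IntervalIntegrable (fun t => (b - t) ^ (β - 1) * φ t) volume a b := by
  have h1 : IntervalIntegrable (fun u : ℝ => u ^ (β - 1)) volume 0 (b - a) :=
    intervalIntegrable_rpow' (by linarith)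
  have h2 := h1.comp_sub_left b
  simp only [sub_zero, sub_sub_cancel] at h2
  refine (h2.symm.mul_continuousOn (hφ.mono ?_))
  rw [uIcc_of_le hab]
  exact Icc_subset_Icc ha hbh

lemma rpow_sub_le {β a k : ℝ} (hβ0 : 0 < β) (hβ1 : β ≤ 1) (ha : 0 < a) (hk : 0 < k) :
    (a + k) ^ β - a ^ β ≤ β * a ^ (β - 1) * k := by
  have hne : β - 1 ≠ -1 := by linarith
  have h0 : (0:ℝ) ∉ uIcc a (a + k) := by
    rw [uIcc_of_le (by linarith)]
    intro hc
    exact absurd hc.1 (by linarith)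
  have hint : ∫ s in a..(a+k), s ^ (β - 1) = ((a+k) ^ β - a ^ β) / β := by
    rw [integral_rpow (Or.inl (by linarith))]
    ring_nf
  have hmono : ∫ s in a..(a+k), s ^ (β - 1) ≤ ∫ _s in a..(a+k), a ^ (β - 1) := by
    apply intervalIntegral.integral_mono_on (by linarith)
    · apply ContinuousOn.intervalIntegrable
      intro s hs
      rw [uIcc_of_le (by linarith)] at hs
      exact (Real.continuousAt_rpow_const s (β-1) (Or.inl (by nlinarith [hs.1]))).continuousWithinAt
    · exact intervalIntegrable_const
    · intro s hs
      exact Real.rpow_le_rpow_of_nonpos ha hs.1 (by linarith)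
  rw [hint, intervalIntegral.integral_const, smul_eq_mul, add_sub_cancel_left] at hmono
  rw [div_le_iff₀ hβ0] at hmono
  calc (a+k) ^ β - a ^ β ≤ k * a ^ (β-1) * β := hmono
    _ = β * a ^ (β-1) * k := by ring

lemma ftc_icc {u : ℝ → ℝ} {h x : ℝ} (hu : ContinuousOn u (Icc 0 h)) (hx : x ∈ Icc (0:ℝ) h) :
    HasDerivWithinAt (fun z => ∫ t in (0:ℝ)..z, u t) (u x) (Icc 0 h) x := by
  haveI : Fact (x ∈ Icc (0:ℝ) h) := ⟨hx⟩
  apply intervalIntegral.integral_hasDerivWithinAt_right (t := Icc (0:ℝ) h)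
  · apply ContinuousOn.intervalIntegrable
    apply hu.mono
    rw [uIcc_of_le hx.1]
    exact Icc_subset_Icc le_rfl hx.2
  · exact ⟨Icc 0 h, self_mem_nhdsWithin, hu.aestronglyMeasurable measurableSet_Icc⟩
  · exact hu x hx

lemma rl_kernel_integral {β x : ℝ} (hβ : 0 < β) (hx : 0 ≤ x) :
    ∫ t in (0:ℝ)..x, (x - t) ^ (β - 1) = x ^ β / β := by
  have := intervalIntegral.integral_comp_sub_left (a := (0:ℝ)) (b := x)
    (fun s : ℝ => s ^ (β - 1)) x
  simp only [sub_self, sub_zero] at this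
  rw [this, integral_rpow (Or.inl (by linarith))]
  rw [Real.zero_rpow (by linarith : β - 1 + 1 ≠ 0)]
  ring_nf

lemma rl_bound {β h : ℝ} {φ : ℝ → ℝ} (hβ : 0 < β) (hφ : ContinuousOn φ (Icc 0 h)) {B x : ℝ}
    (hB : ∀ t ∈ Icc (0:ℝ) h, |φ t| ≤ B) (hx : x ∈ Icc (0:ℝ) h) :
    |RL β φ x| ≤ B * x ^ β / β := by
  have key : (∫ t in (0:ℝ)..x, (x - t) ^ (β - 1) * B) = B * x ^ β / β := by
    rw [intervalIntegral.integral_mul_const, rl_kernel_integral hβ hx.1]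
    ring
  have hB0 : 0 ≤ B := le_trans (abs_nonneg _) (hB x hx)
  have hval : 0 ≤ B * x ^ β / β :=
    div_nonneg (mul_nonneg hB0 (Real.rpow_nonneg hx.1 _)) hβ.le
  rw [← abs_of_nonneg hval, ← key, ← Real.norm_eq_abs]
  apply intervalIntegral.norm_integral_le_abs_of_norm_le
  · rw [Set.uIoc_of_le hx.1]
    filter_upwards [ae_restrict_mem measurableSet_Ioc] with t ht
    have h1 : (0:ℝ) ≤ (x - t) ^ (β - 1) := Real.rpow_nonneg (by linarith [ht.2]) _
    rw [Real.norm_eq_abs, abs_mul, abs_of_nonneg h1]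
    exact mul_le_mul_of_nonneg_left (hB t ⟨le_of_lt ht.1, le_trans ht.2 hx.2⟩) h1
  · have h1 : IntervalIntegrable (fun u : ℝ => u ^ (β - 1)) volume 0 (x - 0) :=
      intervalIntegrable_rpow' (by linarith)
    have h2 := (h1.comp_sub_left x).symm
    simp only [sub_zero, sub_self, sub_sub_cancel] at h2
    exact h2.mul_const B

lemma rl_scaled {β : ℝ} (φ : ℝ → ℝ) {x : ℝ} (hx : 0 < x) :
    RL β φ x = x ^ β * ∫ σ in (0:ℝ)..1, σ ^ (β - 1) * φ (x - σ * x) := by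
  have step1 : RL β φ x = ∫ s in (0:ℝ)..x, s ^ (β - 1) * φ (x - s) := by
    have := intervalIntegral.integral_comp_sub_left (a := (0:ℝ)) (b := x)
      (fun s : ℝ => s ^ (β - 1) * φ (x - s)) x
    simp only [sub_sub_cancel, sub_self, sub_zero] at this
    rw [RL, ← this]
  have step2 : x • (∫ σ in (0:ℝ)..1, (σ * x) ^ (β - 1) * φ (x - σ * x))
      = ∫ s in (0:ℝ)..x, s ^ (β - 1) * φ (x - s) := by
    have := intervalIntegral.smul_integral_comp_mul_right (a := (0:ℝ)) (b := 1)
      (fun s : ℝ => s ^ (β - 1) * φ (x - s)) x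
    simpa using this
  have step3 : (∫ σ in (0:ℝ)..1, (σ * x) ^ (β - 1) * φ (x - σ * x))
      = x ^ (β - 1) * ∫ σ in (0:ℝ)..1, σ ^ (β - 1) * φ (x - σ * x) := by
    rw [← intervalIntegral.integral_const_mul]
    apply intervalIntegral.integral_congr
    intro σ hσ
    rw [uIcc_of_le zero_le_one] at hσ
    simp only []
    rw [Real.mul_rpow hσ.1 hx.le]
    ring
  rw [step1, ← step2, step3, smul_eq_mul, ← mul_assoc]
  congr 1
  calc x * x ^ (β - 1) = x ^ (1:ℝ) * x ^ (β - 1) := by rw [Real.rpow_one]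
    _ = x ^ (1 + (β - 1)) := (Real.rpow_add hx 1 (β-1)).symm
    _ = x ^ β := by ring_nf

lemma affine_mem {h x σ : ℝ} (hx : x ∈ Icc (0:ℝ) h) (hσ : σ ∈ Ioc (0:ℝ) 1) :
    x - σ * x ∈ Icc (0:ℝ) h := by
  constructor
  · nlinarith [hx.1, hσ.2, hσ.1]
  · nlinarith [hx.1, hx.2, hσ.1]

lemma rl_continuousOn {β h : ℝ} {φ : ℝ → ℝ} (hβ : 0 < β) (hφ : ContinuousOn φ (Icc 0 h)) :
    ContinuousOn (RL β φ) (Icc 0 h) := by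
  obtain ⟨B, hB⟩ := isCompact_Icc.exists_bound_of_continuousOn hφ
  set I : ℝ → ℝ := fun x => ∫ σ in Ioc (0:ℝ) 1, σ ^ (β - 1) * φ (x - σ * x) with hI
  have hcontI : ContinuousOn I (Icc 0 h) := by
    apply MeasureTheory.continuousOn_of_dominated (bound := fun σ => σ ^ (β - 1) * B)
    · intro x hx
      apply ContinuousOn.aestronglyMeasurable _ measurableSet_Ioc
      apply ContinuousOn.mul
      · intro σ hσ
        exact (Real.continuousAt_rpow_const σ (β-1) (Or.inl (ne_of_gt hσ.1))).continuousWithinAt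
      · apply hφ.comp ((continuous_const.sub (continuous_id.mul continuous_const)).continuousOn)
        intro σ hσ
        exact affine_mem hx hσ
    · intro x hx
      filter_upwards [ae_restrict_mem measurableSet_Ioc] with σ hσ
      have h1 : (0:ℝ) ≤ σ ^ (β - 1) := Real.rpow_nonneg hσ.1.le _
      rw [norm_mul, Real.norm_eq_abs, Real.norm_eq_abs, abs_of_nonneg h1]
      exact mul_le_mul_of_nonneg_left (hB _ (affine_mem hx hσ)) h1
    · have h1 : IntervalIntegrable (fun σ : ℝ => σ ^ (β - 1)) volume 0 1 :=
        intervalIntegrable_rpow' (by linarith)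
      rw [intervalIntegrable_iff_integrableOn_Ioc_of_le zero_le_one] at h1
      exact h1.mul_const B
    · filter_upwards [ae_restrict_mem measurableSet_Ioc] with σ hσ
      apply ContinuousOn.mul continuousOn_const
      apply hφ.comp ((continuous_id.sub (continuous_const.mul continuous_id)).continuousOn)
      intro x hx
      exact affine_mem hx hσ
  have heq : ∀ x ∈ Icc (0:ℝ) h, RL β φ x = x ^ β * I x := by
    intro x hx
    rcases eq_or_lt_of_le hx.1 with h0 | h0
    · rw [← h0]
      simp [RL, Real.zero_rpow (ne_of_gt hβ)]
    · rw [rl_scaled φ h0, hI]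
      congr 1
      exact intervalIntegral.integral_of_le zero_le_one
  apply ContinuousOn.congr _ (fun x hx => heq x hx)
  exact (Real.continuous_rpow_const hβ.le).continuousOn.mul hcontI

lemma ftc_right_kernel {γ h x b : ℝ} {ψ : ℝ → ℝ} (hψ : ContinuousOn ψ (Icc 0 h))
    (hx : x ∈ Icc (0:ℝ) h) (hb : b ∈ Ico (0:ℝ) x)
    (hint : IntervalIntegrable (fun t => (x - t) ^ γ * ψ t) volume 0 b) :
    HasDerivWithinAt (fun z => ∫ t in (0:ℝ)..z, (x - t) ^ γ * ψ t)
      ((x - b) ^ γ * ψ b) (Ici b) b := by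
  have hbx : b < x := hb.2
  have hbh : b < h := lt_of_lt_of_le hbx hx.2
  apply intervalIntegral.integral_hasDerivWithinAt_right (t := Ioi b) hint
  · refine ⟨Ioo b x, Ioo_mem_nhdsGT_of_mem ⟨le_rfl, hbx⟩, ?_⟩
    apply ContinuousOn.aestronglyMeasurable _ measurableSet_Ioo
    apply ContinuousOn.mul
    · intro t ht
      exact ((Real.continuousAt_rpow_const (x - t) γ
        (Or.inl (by simp only [ne_eq, sub_eq_zero]; exact fun hc => absurd hc.symm (ne_of_lt ht.2)))).comp
        ((continuous_const.sub continuous_id).continuousAt)).continuousWithinAt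
    · exact hψ.mono (fun t ht => ⟨le_trans hb.1 ht.1.le, le_trans ht.2.le hx.2⟩)
  · apply ContinuousWithinAt.mul
    · exact (((Real.continuousAt_rpow_const (x - b) γ (Or.inl (ne_of_gt (by linarith)))).comp
        ((continuous_const.sub continuous_id).continuousAt))).continuousWithinAt
    · have h1 : ContinuousWithinAt ψ (Icc 0 h) b := hψ b ⟨hb.1, hbh.le⟩
      apply h1.mono_of_mem_nhdsWithin
      exact mem_of_superset (Ioc_mem_nhdsGT_of_mem ⟨le_rfl, hbh⟩)
        (fun t ht => ⟨le_trans hb.1 ht.1.le, ht.2⟩)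

lemma partsA {α h : ℝ} {f : ℝ → ℝ} (hα0 : 0 < α) (hα1 : α < 1) (hh : 0 < h)
    (hfd : DifferentiableOn ℝ f (Icc 0 h))
    (hφc : ContinuousOn (derivWithin f (Icc 0 h)) (Icc 0 h)) (hf0 : f 0 = 0)
    {x : ℝ} (hx : x ∈ Icc (0:ℝ) h) :
    RL α f x = (1/α) * RL (α+1) (derivWithin f (Icc 0 h)) x := by
  have hfc : ContinuousOn f (Icc 0 h) := hfd.continuousOn
  set φ := derivWithin f (Icc 0 h) with hφdef
  rcases eq_or_lt_of_le hx.1 with h0 | h0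
  · rw [← h0]; simp [RL]
  -- x > 0 now
  have hsub : Icc (0:ℝ) x ⊆ Icc (0:ℝ) h := Icc_subset_Icc le_rfl hx.2
  have hint1 : IntervalIntegrable (fun t => (x - t) ^ (α - 1) * f t) volume 0 x :=
    rl_integrable hα0 hfc le_rfl h0.le hx.2
  have hint2 : IntervalIntegrable (fun t => (x - t) ^ α * φ t) volume 0 x := by
    have := rl_integrable (by linarith : (0:ℝ) < α + 1) hφc (a := 0) (b := x) le_rfl h0.le hx.2
    simpa [add_sub_cancel_right] using this
  have c1 : ContinuousOn (fun b => ∫ t in (0:ℝ)..b, (x - t) ^ (α - 1) * f t) (Icc 0 x) := by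
    have := intervalIntegral.continuousOn_primitive_interval' hint1 (by
      rw [uIcc_of_le h0.le]; exact ⟨le_rfl, h0.le⟩)
    rwa [uIcc_of_le h0.le] at this
  have c3 : ContinuousOn (fun b => ∫ t in (0:ℝ)..b, (x - t) ^ α * φ t) (Icc 0 x) := by
    have := intervalIntegral.continuousOn_primitive_interval' hint2 (by
      rw [uIcc_of_le h0.le]; exact ⟨le_rfl, h0.le⟩)
    rwa [uIcc_of_le h0.le] at this
  have c2 : ContinuousOn (fun b => ((x - b) ^ α / α) * f b) (Icc 0 x) := by
    apply ContinuousOn.mul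
    · apply ContinuousOn.div_const
      intro b _
      exact ((Real.continuousAt_rpow_const (x - b) α (Or.inr hα0.le)).comp
        ((continuous_const.sub continuous_id).continuousAt)).continuousWithinAt
    · exact hfc.mono hsub
  have key := constant_of_has_deriv_right_zero (f := fun b =>
      (∫ t in (0:ℝ)..b, (x - t) ^ (α - 1) * f t)
      + ((x - b) ^ α / α) * f b - (1/α) * ∫ t in (0:ℝ)..b, (x - t) ^ α * φ t)
    (a := 0) (b := x)
    ((c1.add c2).sub (continuousOn_const.mul c3))
    (by
      intro b hb
      have hbx : b < x := hb.2
      have hbh' : b ∈ Icc (0:ℝ) h := ⟨hb.1, le_trans hbx.le hx.2⟩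
      have hxb0 : (0:ℝ) < x - b := by linarith
      have d1 : HasDerivWithinAt (fun z => ∫ t in (0:ℝ)..z, (x - t) ^ (α - 1) * f t)
          ((x - b) ^ (α - 1) * f b) (Ici b) b :=
        ftc_right_kernel hfc hx hb (hint1.mono_set
          (by rw [uIcc_of_le hb.1, uIcc_of_le h0.le]; exact Icc_subset_Icc le_rfl hbx.le))
      have d3 : HasDerivWithinAt (fun z => ∫ t in (0:ℝ)..z, (x - t) ^ α * φ t)
          ((x - b) ^ α * φ b) (Ici b) b :=
        ftc_right_kernel hφc hx hb (hint2.mono_set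
          (by rw [uIcc_of_le hb.1, uIcc_of_le h0.le]; exact Icc_subset_Icc le_rfl hbx.le))
      have du : HasDerivAt (fun b => (x - b) ^ α / α) (-(x - b) ^ (α - 1)) b := by
        have h1 : HasDerivAt (fun y : ℝ => y ^ α) (α * (x - b) ^ (α - 1)) (x - b) :=
          Real.hasDerivAt_rpow_const (Or.inl (ne_of_gt hxb0))
        have h2 : HasDerivAt (fun b : ℝ => x - b) (-1) b := by
          simpa using (hasDerivAt_id b).const_sub x
        have h3 := (h1.comp b h2).div_const α
        rw [show -(x - b) ^ (α - 1) = α * (x - b) ^ (α - 1) * -1 / α by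
          rw [mul_neg_one, neg_div, mul_div_cancel_left₀ _ hα0.ne']]
        exact h3
      have dfb : HasDerivWithinAt f (φ b) (Ici b) b := by
        have h1 : HasDerivWithinAt f (φ b) (Icc 0 h) b :=
          (hfd b hbh').hasDerivWithinAt
        apply h1.mono_of_mem_nhdsWithin
        exact mem_of_superset (inter_mem_nhdsWithin (Ici b)
          (Iic_mem_nhds (lt_of_lt_of_le hbx hx.2)))
          (fun t ht => ⟨le_trans hb.1 ht.1, ht.2⟩)
      have d2 : HasDerivWithinAt (fun b => ((x - b) ^ α / α) * f b)
          (-(x - b) ^ (α - 1) * f b + ((x - b) ^ α / α) * φ b) (Ici b) b :=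
        (du.hasDerivWithinAt).mul dfb
      have dF := (d1.add d2).sub (d3.const_mul (1/α))
      convert dF using 1
      · rfl
      · ring)
  have hFx := key x ⟨h0.le, le_rfl⟩
  simp only [intervalIntegral.integral_same, sub_self, Real.zero_rpow (ne_of_gt hα0),
    sub_zero, zero_div, zero_mul, add_zero, mul_zero, hf0] at hFx
  rw [RL, RL]
  rw [show α + 1 - 1 = α by ring]
  linarith [hFx]

lemma rl_succ {α : ℝ} (φ : ℝ → ℝ) (v : ℝ) :
    RL (α+1) φ v = ∫ t in (0:ℝ)..v, (v - t) ^ α * φ t := by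
  rw [RL, add_sub_cancel_right]

lemma lemB_deriv {α h : ℝ} {φ : ℝ → ℝ} (hα0 : 0 < α) (hα1 : α < 1)
    (hφ : ContinuousOn φ (Icc 0 h)) {y : ℝ} (hy : y ∈ Ico (0:ℝ) h) :
    HasDerivWithinAt (RL (α+1) φ) (α * RL α φ y) (Ici y) y := by
  obtain ⟨B, hB⟩ := isCompact_Icc.exists_bound_of_continuousOn hφ
  have hB0 : 0 ≤ B := le_trans (norm_nonneg _) (hB 0 ⟨le_rfl, (hy.1.trans hy.2.le)⟩)
  have hyIcc : y ∈ Icc (0:ℝ) h := ⟨hy.1, hy.2.le⟩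
  rw [hasDerivWithinAt_iff_tendsto_slope, Set.Ici_sdiff_left]
  have hIy : IntervalIntegrable (fun t => (y - t) ^ α * φ t) volume 0 y := by
    have := rl_integrable (by linarith : (0:ℝ) < α + 1) hφ (a := 0) le_rfl hy.1 hy.2.le
    simpa [add_sub_cancel_right] using this
  have hev : Ioc y h ∈ 𝓝[>] y := Ioc_mem_nhdsGT_of_mem ⟨le_rfl, hy.2⟩
  -- Term 1 tendsto
  have hT1 : Tendsto (fun z => ∫ t in (0:ℝ)..y, ((z - t) ^ α - (y - t) ^ α) * φ t / (z - y))
      (𝓝[>] y) (𝓝 (α * RL α φ y)) := by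
    have htarget : α * RL α φ y = ∫ t in (0:ℝ)..y, α * ((y - t) ^ (α-1) * φ t) := by
      rw [RL, ← intervalIntegral.integral_const_mul]
    rw [htarget]
    apply intervalIntegral.tendsto_integral_filter_of_dominated_convergence
      (bound := fun t => α * ((y - t) ^ (α - 1) * B))
    · apply Eventually.of_forall
      intro z
      apply ContinuousOn.aestronglyMeasurable _ measurableSet_uIoc
      apply ContinuousOn.div_const
      apply ContinuousOn.mul
      · exact (((Real.continuous_rpow_const hα0.le).comp
            (continuous_const.sub continuous_id)).sub ((Real.continuous_rpow_const hα0.le).comp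
            (continuous_const.sub continuous_id))).continuousOn
      · apply hφ.mono
        rw [uIoc_of_le hy.1]
        exact fun t ht => ⟨ht.1.le, ht.2.trans hy.2.le⟩
    · filter_upwards [self_mem_nhdsWithin] with z hz
      filter_upwards [compl_mem_ae_iff.mpr (volume_singleton (a := y))] with t hty htI
      rw [uIoc_of_le hy.1] at htI
      have hty' : t < y := lt_of_le_of_ne htI.2 (by simpa using hty)
      have ha : (0:ℝ) < y - t := by linarith
      have hk : (0:ℝ) < z - y := by simpa using hz
      have hnum0 : (0:ℝ) ≤ (z - t) ^ α - (y - t) ^ α :=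
        sub_nonneg.mpr (Real.rpow_le_rpow ha.le (by linarith) hα0.le)
      have hnum : (z - t) ^ α - (y - t) ^ α ≤ α * (y - t) ^ (α - 1) * (z - y) := by
        have := rpow_sub_le hα0 hα1.le ha hk
        convert this using 3 <;> ring
      rw [Real.norm_eq_abs, abs_div, abs_mul, abs_of_nonneg hnum0,
        abs_of_pos hk]
      rw [div_le_iff₀ hk]
      calc ((z - t) ^ α - (y - t) ^ α) * |φ t|
          ≤ (α * (y - t) ^ (α - 1) * (z - y)) * B := by
            apply mul_le_mul hnum (hB t ⟨htI.1.le, hty'.le.trans hy.2.le⟩)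
              (abs_nonneg _)
            positivity
        _ = α * ((y - t) ^ (α - 1) * B) * (z - y) := by ring
    · have h1 : IntervalIntegrable (fun t => (y - t) ^ (α - 1) * B) volume 0 y :=
        rl_integrable hα0 (continuousOn_const (c := B)) le_rfl hy.1 hy.2.le
      simpa [mul_assoc] using h1.const_mul α
    · filter_upwards [compl_mem_ae_iff.mpr (volume_singleton (a := y))] with t hty htI
      rw [uIoc_of_le hy.1] at htI
      have hty' : t < y := lt_of_le_of_ne htI.2 (by simpa using hty)
      have ha : (0:ℝ) < y - t := by linarith
      have hd : HasDerivAt (fun z : ℝ => (z - t) ^ α) (α * (y - t) ^ (α - 1)) y := by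
        have h1 : HasDerivAt (fun u : ℝ => u ^ α) (α * (y - t) ^ (α - 1)) (y - t) :=
          Real.hasDerivAt_rpow_const (Or.inl (ne_of_gt ha))
        have h2 : HasDerivAt (fun z : ℝ => z - t) 1 y := by
          simpa using (hasDerivAt_id y).sub_const t
        have h3 := h1.comp y h2
        rw [mul_one] at h3
        exact h3
      have hs := hasDerivAt_iff_tendsto_slope.mp hd
      have hsub2 : Ioi y ⊆ {y}ᶜ := fun z hz => mem_compl_singleton_iff.mpr (ne_of_gt hz)
      have hs2 := (hs.mono_left (nhdsWithin_mono y hsub2)).mul_const (φ t)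
      rw [← mul_assoc]
      apply hs2.congr
      intro z
      rw [slope_def_field]
      ring
  -- Term 2 tendsto 0
  have hT2 : Tendsto (fun z => (∫ t in y..z, (z - t) ^ α * φ t) / (z - y))
      (𝓝[>] y) (𝓝 0) := by
    apply squeeze_zero_norm' (a := fun z => B * (z - y) ^ α / (α + 1))
    · filter_upwards [hev] with z hz
      have hk : (0:ℝ) < z - y := by linarith [hz.1]
      have hkey : ∫ t in y..z, (z - t) ^ α = (z - y) ^ (α + 1) / (α + 1) := by
        have h1 := intervalIntegral.integral_comp_sub_left (a := y) (b := z)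
          (fun s : ℝ => s ^ α) z
        simp only [sub_self] at h1
        have h2 : ∫ s in (0:ℝ)..(z - y), s ^ α = (z - y) ^ (α + 1) / (α + 1) := by
          rw [integral_rpow (Or.inl (by linarith : (-1:ℝ) < α)),
            Real.zero_rpow (by linarith : α + 1 ≠ 0)]
          ring
        calc ∫ t in y..z, (z - t) ^ α = ∫ s in (0:ℝ)..(z - y), s ^ α := h1
          _ = (z - y) ^ (α + 1) / (α + 1) := h2
      have hbnd : ‖∫ t in y..z, (z - t) ^ α * φ t‖ ≤ B * (z - y) ^ (α + 1) / (α + 1) := by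
        have := intervalIntegral.norm_integral_le_abs_of_norm_le
          (g := fun t => (z - t) ^ α * B) (f := fun t => (z - t) ^ α * φ t)
          (μ := volume) (a := y) (b := z) ?_ ?_
        · refine this.trans ?_
          rw [intervalIntegral.integral_mul_const, hkey]
          rw [abs_of_nonneg (by positivity)]
          ring_nf
          exact le_rfl
        · rw [uIoc_of_le (by linarith : y ≤ z)]
          filter_upwards [ae_restrict_mem measurableSet_Ioc] with t ht
          have h1 : (0:ℝ) ≤ (z - t) ^ α := Real.rpow_nonneg (by linarith [ht.2]) _
          rw [Real.norm_eq_abs, abs_mul, abs_of_nonneg h1]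
          exact mul_le_mul_of_nonneg_left
            (hB t ⟨hy.1.trans ht.1.le, ht.2.trans hz.2⟩) h1
        · have h1 : IntervalIntegrable (fun u : ℝ => u ^ α) volume 0 (z - y) :=
            intervalIntegrable_rpow' (by linarith)
          have h2 := (h1.comp_sub_left z).symm
          simp only [sub_zero, sub_sub_cancel, sub_self] at h2
          exact h2.mul_const B
      rw [norm_div, Real.norm_eq_abs (z - y), abs_of_pos hk, div_le_iff₀ hk]
      refine hbnd.trans (le_of_eq ?_)
      rw [Real.rpow_add hk, Real.rpow_one]
      ring
    · have hc : Tendsto (fun z => B * (z - y) ^ α / (α + 1)) (𝓝 y)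
          (𝓝 (B * (y - y) ^ α / (α + 1))) := by
        apply Continuous.tendsto
        exact (continuous_const.mul ((Real.continuous_rpow_const hα0.le).comp
          (continuous_id.sub continuous_const))).div_const _
      have : B * (y - y) ^ α / (α + 1) = 0 := by
        simp [Real.zero_rpow (ne_of_gt hα0)]
      rw [this] at hc
      exact hc.mono_left nhdsWithin_le_nhds
  -- Combine
  have hcomb := hT1.add hT2
  rw [add_zero] at hcomb
  apply hcomb.congr'
  filter_upwards [hev] with z hz
  have hk : (0:ℝ) < z - y := by linarith [hz.1]
  have hIz : IntervalIntegrable (fun t => (z - t) ^ α * φ t) volume 0 z := by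
    have := rl_integrable (by linarith : (0:ℝ) < α + 1) hφ (a := 0) (b := z)
      le_rfl (by linarith [hz.1, hy.1]) hz.2
    simpa [add_sub_cancel_right] using this
  have hIz1 : IntervalIntegrable (fun t => (z - t) ^ α * φ t) volume 0 y := by
    apply hIz.mono_set
    rw [uIcc_of_le hy.1, uIcc_of_le (hy.1.trans hz.1.le)]
    exact Icc_subset_Icc le_rfl hz.1.le
  have hIz2 : IntervalIntegrable (fun t => (z - t) ^ α * φ t) volume y z := by
    apply hIz.mono_set
    rw [uIcc_of_le hz.1.le, uIcc_of_le (hy.1.trans hz.1.le)]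
    exact Icc_subset_Icc hy.1 le_rfl
  rw [slope_def_field, rl_succ, rl_succ]
  rw [← intervalIntegral.integral_add_adjacent_intervals hIz1 hIz2]
  rw [intervalIntegral.integral_div]
  rw [← add_div]
  congr 1
  have heq2 : (∫ x in (0:ℝ)..y, ((z - x) ^ α - (y - x) ^ α) * φ x)
      = (∫ x in (0:ℝ)..y, (z - x) ^ α * φ x) - ∫ x in (0:ℝ)..y, (y - x) ^ α * φ x := by
    rw [← intervalIntegral.integral_sub hIz1 hIy]
    apply intervalIntegral.integral_congr
    intro t ht
    ring
  rw [heq2]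
  ring

lemma ftc_right_cont {h : ℝ} {u : ℝ → ℝ} (hu : ContinuousOn u (Icc 0 h)) {y : ℝ}
    (hy : y ∈ Ico (0:ℝ) h) :
    HasDerivWithinAt (fun z => ∫ t in (0:ℝ)..z, u t) (u y) (Ici y) y := by
  apply intervalIntegral.integral_hasDerivWithinAt_right (t := Ioi y)
  · apply ContinuousOn.intervalIntegrable
    apply hu.mono
    rw [uIcc_of_le hy.1]
    exact Icc_subset_Icc le_rfl hy.2.le
  · exact ⟨Ioc y h, Ioc_mem_nhdsGT_of_mem ⟨le_rfl, hy.2⟩,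
      (hu.mono (fun t ht => ⟨hy.1.trans ht.1.le, ht.2⟩)).aestronglyMeasurable measurableSet_Ioc⟩
  · exact (hu y ⟨hy.1, hy.2.le⟩).mono_of_mem_nhdsWithin
      (mem_of_superset (Ioc_mem_nhdsGT_of_mem ⟨le_rfl, hy.2⟩)
        (fun t ht => ⟨hy.1.trans ht.1.le, ht.2⟩))

lemma lemB {α h : ℝ} {φ : ℝ → ℝ} (hα0 : 0 < α) (hα1 : α < 1) (hh : 0 < h)
    (hφ : ContinuousOn φ (Icc 0 h)) {x : ℝ} (hx : x ∈ Icc (0:ℝ) h) :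
    RL (α+1) φ x = α * ∫ y in (0:ℝ)..x, RL α φ y := by
  have hrlc : ContinuousOn (RL α φ) (Icc 0 h) := rl_continuousOn hα0 hφ
  have hint : IntervalIntegrable (RL α φ) volume 0 h := by
    apply ContinuousOn.intervalIntegrable
    rwa [uIcc_of_le hh.le]
  refine eq_of_has_deriv_right_eq (f' := fun y => α * RL α φ y)
    (fun y hy => lemB_deriv hα0 hα1 hφ hy)
    (fun y hy => ((ftc_right_cont hrlc hy).const_mul α)) ?_ ?_ ?_ x hx
  · exact rl_continuousOn (by linarith) hφ
  · apply ContinuousOn.const_smul (M := ℝ) ?_ α |>.congr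
    · intro z hz; rfl
    · have := intervalIntegral.continuousOn_primitive_interval' hint
        (by rw [uIcc_of_le hh.le]; exact ⟨le_rfl, hh.le⟩)
      rwa [uIcc_of_le hh.le] at this
  · simp [RL]

lemma mainDeriv {α h : ℝ} {f : ℝ → ℝ} (hα0 : 0 < α) (hα1 : α < 1) (hh : 0 < h)
    (hfd : DifferentiableOn ℝ f (Icc 0 h))
    (hφc : ContinuousOn (derivWithin f (Icc 0 h)) (Icc 0 h)) (hf0 : f 0 = 0)
    {x : ℝ} (hx : x ∈ Icc (0:ℝ) h) :
    HasDerivWithinAt (RL α f) (RL α (derivWithin f (Icc 0 h)) x) (Icc 0 h) x := by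
  set φ := derivWithin f (Icc 0 h) with hφdef
  have heq : ∀ z ∈ Icc (0:ℝ) h, RL α f z = ∫ y in (0:ℝ)..z, RL α φ y := by
    intro z hz
    rw [partsA hα0 hα1 hh hfd hφc hf0 hz, lemB hα0 hα1 hh hφc hz]
    field_simp
  have hd : HasDerivWithinAt (fun z => ∫ y in (0:ℝ)..z, RL α φ y) (RL α φ x) (Icc 0 h) x :=
    ftc_icc (rl_continuousOn hα0 hφc) hx
  exact hd.congr heq (heq x hx)

theorem stmt10 (α : ℝ) (hα0 : 0 < α) (hα1 : α < 1) :
    ∃ C > 0, ∀ (h : ℝ) (m : ℕ) (g : ℝ → ℝ) (M : ℝ),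
      0 < h → 1 ≤ m →
      ContDiffOn ℝ m g (Set.Icc 0 h) →
      (∀ j ≤ m, iteratedDerivWithin j g (Set.Icc 0 h) 0 = 0) →
      (∀ i : ℕ, 1 ≤ i → i ≤ m → ∀ x ∈ Set.Icc (0 : ℝ) h,
        |iteratedDerivWithin i g (Set.Icc 0 h) x| ≤ M) →
      ContDiffOn ℝ m (fun x : ℝ => ∫ t in (0 : ℝ)..x, (x - t) ^ (α - 1) * g t)
          (Set.Icc 0 h) ∧
      (∀ i : ℕ, 1 ≤ i → i ≤ m → ∀ x ∈ Set.Icc (0 : ℝ) h,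
        iteratedDerivWithin i (fun x : ℝ => ∫ t in (0 : ℝ)..x, (x - t) ^ (α - 1) * g t)
            (Set.Icc 0 h) x =
          ∫ t in (0 : ℝ)..x, (x - t) ^ (α - 1) * iteratedDerivWithin i g (Set.Icc 0 h) t) ∧
      (∀ j ≤ m, iteratedDerivWithin j
          (fun x : ℝ => ∫ t in (0 : ℝ)..x, (x - t) ^ (α - 1) * g t) (Set.Icc 0 h) 0 = 0) ∧
      (∀ i : ℕ, 1 ≤ i → i ≤ m → ∀ x ∈ Set.Icc (0 : ℝ) h,
        |iteratedDerivWithin i (fun x : ℝ => ∫ t in (0 : ℝ)..x, (x - t) ^ (α - 1) * g t)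
            (Set.Icc 0 h) x| ≤ C * h ^ α * M) := by
  refine ⟨1/α, by positivity, ?_⟩
  intro h m g M hh hm hg hz hM
  set K := Set.Icc (0:ℝ) h with hK
  have hud : UniqueDiffOn ℝ K := uniqueDiffOn_Icc hh
  have h0K : (0:ℝ) ∈ K := ⟨le_rfl, hh.le⟩
  have hw : (fun x : ℝ => ∫ t in (0 : ℝ)..x, (x - t) ^ (α - 1) * g t) = RL α g := rfl
  rw [hw]
  have hchar := (contDiffOn_nat_iff_continuousOn_differentiableOn_deriv (n := m) hud).mp hg
  have hC : ∀ i, i ≤ m → ContinuousOn (iteratedDerivWithin i g K) K := hchar.1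
  have hD : ∀ i, i < m → DifferentiableOn ℝ (iteratedDerivWithin i g K) K := hchar.2
  -- derivative within of iterates
  have hsucc : ∀ i, ∀ t ∈ K, derivWithin (iteratedDerivWithin i g K) K t
      = iteratedDerivWithin (i+1) g K t :=
    fun i t ht => (congrFun iteratedDerivWithin_succ t).symm
  have hCd : ∀ i, i < m → ContinuousOn (derivWithin (iteratedDerivWithin i g K) K) K :=
    fun i hi => (hC (i+1) hi).congr (fun t ht => hsucc i t ht)
  -- main claim by induction
  have claim : ∀ i, i ≤ m → ∀ x ∈ K,
      iteratedDerivWithin i (RL α g) K x = RL α (iteratedDerivWithin i g K) x := by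
    intro i
    induction i with
    | zero =>
      intro _ x hx
      rw [iteratedDerivWithin_zero, iteratedDerivWithin_zero]
    | succ i ih =>
      intro hi x hx
      have him : i < m := lt_of_lt_of_le (Nat.lt_succ_self i) hi
      have ihEq := ih him.le
      have hder : HasDerivWithinAt (RL α (iteratedDerivWithin i g K))
          (RL α (derivWithin (iteratedDerivWithin i g K) K) x) K x :=
        mainDeriv hα0 hα1 hh (hD i him) (hCd i him) (hz i him.le) hx
      rw [iteratedDerivWithin_succ]
      rw [derivWithin_congr (fun t ht => ihEq t ht) (ihEq x hx)]
      rw [hder.derivWithin (hud x hx)]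
      rw [RL, RL]
      apply intervalIntegral.integral_congr
      intro t ht
      rw [uIcc_of_le hx.1] at ht
      dsimp only
      rw [hsucc i t ⟨ht.1, ht.2.trans hx.2⟩]
  have hM0 : 0 ≤ M := le_trans (abs_nonneg _) (hM 1 le_rfl hm 0 h0K)
  refine ⟨?_, ?_, ?_, ?_⟩
  · -- ContDiffOn
    rw [contDiffOn_nat_iff_continuousOn_differentiableOn_deriv (n := m) hud]
    constructor
    · intro i hi
      exact (rl_continuousOn hα0 (hC i hi)).congr (fun x hx => claim i hi x hx)
    · intro i hi
      intro x hx
      have hd := mainDeriv hα0 hα1 hh (hD i hi) (hCd i hi) (hz i hi.le) hx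
      exact (hd.differentiableWithinAt).congr (fun t ht => claim i hi.le t ht)
        (claim i hi.le x hx)
  · intro i hi1 him x hx
    exact claim i him x hx
  · intro j hj
    rw [claim j hj 0 h0K]
    simp [RL]
  · intro i hi1 him x hx
    rw [claim i him x hx]
    have hb := rl_bound hα0 (hC i him) (hM i hi1 him) hx
    refine hb.trans ?_
    rw [show (1/α) * h ^ α * M = M * h ^ α / α from by ring]
    gcongr M * ?_ / α
    exact Real.rpow_le_rpow hx.1 hx.2 hα0.le
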